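/- The full transformation monoid on {1,…,n} (n ≥ 2) is generated by the n-cycle (1,2,…,n), the transposition (1,2), and the unitary transformation sending n to 1 and fixing all other elements. -/

import Mathlib

open Function

/-- Coercion of permutations into the full transformation monoid, as a monoid hom. -/
def permToEnd (α : Type*) : Equiv.Perm α →* Function.End α where
  toFun σ := ⇑σ
  map_one' := rfl
  map_mul' _ _ := rfl

/-- The full transformation monoid on `{1, …, n}` (`n ≥ 2`) is generated by the
`n`-cycle `(1, 2, …, n)`, the transposition `(1, 2)`, and the unitary
transformation sending `n` to `1` and fixing all other elements. -/
theorem full_transformation_monoid_generators (n : ℕ) (hn : 2 ≤ n) :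
    Submonoid.closure
      ({⇑(finRotate n),
        ⇑(Equiv.swap (⟨0, by omega⟩ : Fin n) ⟨1, by omega⟩),
        (fun i : Fin n => if i = ⟨n - 1, by omega⟩ then ⟨0, by omega⟩ else i)} :
        Set (Function.End (Fin n))) = ⊤ := by
  obtain ⟨m, rfl⟩ : ∃ m, n = m + 2 := ⟨n - 2, by omega⟩
  set n := m + 2 with hn2
  set M : Submonoid (Function.End (Fin n)) := Submonoid.closure _ with hM
  have hrot : ⇑(finRotate n) ∈ M := Submonoid.subset_closure (Set.mem_insert _ _)
  have hswap : ⇑(Equiv.swap (⟨0, by omega⟩ : Fin n) ⟨1, by omega⟩) ∈ M :=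
    Submonoid.subset_closure (Set.mem_insert_of_mem _ (Set.mem_insert _ _))
  have hcoll : (fun i : Fin n => if i = ⟨n - 1, by omega⟩ then ⟨0, by omega⟩ else i) ∈ M :=
    Submonoid.subset_closure (Set.mem_insert_of_mem _ (Set.mem_insert_of_mem _ rfl))
  -- preimage submonoid in the permutation group
  set N : Submonoid (Equiv.Perm (Fin n)) := M.comap (permToEnd (Fin n)) with hN
  have hinv : ∀ σ ∈ N, σ⁻¹ ∈ N := by
    intro σ hσ
    have h1 : σ⁻¹ = σ ^ (orderOf σ - 1) := by
      have hpos : 0 < orderOf σ := orderOf_pos σ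
      have hmul : σ * σ ^ (orderOf σ - 1) = 1 := by
        rw [← pow_succ', Nat.sub_add_cancel hpos]
        exact pow_orderOf_eq_one σ
      exact inv_eq_of_mul_eq_one_right hmul
    rw [h1]
    exact pow_mem hσ _
  let G : Subgroup (Equiv.Perm (Fin n)) :=
    { N with inv_mem' := fun h => hinv _ h }
  have hGtop : G = ⊤ := by
    rw [eq_top_iff, ← Equiv.Perm.closure_cycle_adjacent_swap (isCycle_finRotate (n := m))
      support_finRotate (⟨0, by omega⟩ : Fin n), Subgroup.closure_le]
    have h01 : finRotate n (⟨0, by omega⟩ : Fin n) = ⟨1, by omega⟩ := by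
      show finRotate (m + 1 + 1) _ = _
      rw [finRotate_succ_apply]
      ext
      simp [Fin.add_def]
    intro σ hσ
    rcases hσ with h | h
    · subst h; exact hrot
    · simp only [Set.mem_singleton_iff] at h
      subst h
      rw [h01]
      exact hswap
  have hperm : ∀ σ : Equiv.Perm (Fin n), ⇑σ ∈ M := fun σ =>
    (hGtop ▸ Subgroup.mem_top σ : σ ∈ G)
  -- collapse maps
  have hmul : ∀ (u v : Function.End (Fin n)) (y : Fin n), (u * v) y = u (v y) :=
    fun _ _ _ => rfl
  have hcollapse : ∀ a b : Fin n, a ≠ b →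
      ((fun x : Fin n => if x = a then b else x) : Function.End (Fin n)) ∈ M := by
    intro a b hab
    set a0 : Fin n := ⟨n - 1, by omega⟩ with ha0
    set b0 : Fin n := ⟨0, by omega⟩ with hb0
    have ha0b0 : a0 ≠ b0 := by
      simp only [ha0, hb0, Ne, Fin.mk.injEq]
      omega
    obtain ⟨σ, hσa, hσb⟩ : ∃ σ : Equiv.Perm (Fin n), σ a0 = a ∧ σ b0 = b := by
      set τ := Equiv.swap a0 a with hτ
      have hτa : τ a0 = a := Equiv.swap_apply_left _ _
      set b' := τ b0 with hb'
      have hb'a : b' ≠ a := fun h => ha0b0 (τ.injective (by rw [hτa, ← h]))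
      by_cases hb : b' = b
      · exact ⟨τ, hτa, hb⟩
      · refine ⟨τ.trans (Equiv.swap b' b), ?_, ?_⟩
        · show Equiv.swap b' b (τ a0) = a
          rw [hτa, Equiv.swap_apply_of_ne_of_ne (Ne.symm hb'a) hab]
        · show Equiv.swap b' b (τ b0) = b
          rw [← hb', Equiv.swap_apply_left]
    set s : Function.End (Fin n) := ⇑σ with hs
    set si : Function.End (Fin n) := ⇑σ⁻¹ with hsi
    set c0 : Function.End (Fin n) := fun x => if x = a0 then b0 else x with hc0
    set cab : Function.End (Fin n) := fun x => if x = a then b else x with hcab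
    have key : s * c0 * si = cab := by
      funext x
      show σ (if σ⁻¹ x = a0 then b0 else σ⁻¹ x) = if x = a then b else x
      have hsa : σ a0 = a := hσa
      have hsb : σ b0 = b := hσb
      by_cases h : σ⁻¹ x = a0
      · have hx : x = a := by rw [← (show σ (σ⁻¹ x) = x from σ.apply_symm_apply x), h, hsa]
        rw [if_pos h, hsb, if_pos hx]
      · have hx : x ≠ a := fun hx => h (by rw [hx, ← hsa, (show σ⁻¹ (σ a0) = a0 from σ.symm_apply_apply a0)])
        rw [if_neg h, (show σ (σ⁻¹ x) = x from σ.apply_symm_apply x), if_neg hx]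
    rw [← key]
    exact mul_mem (mul_mem (hperm σ) hcoll) (hperm σ⁻¹)
  -- main induction on the defect
  rw [eq_top_iff]
  intro f₀ _
  have main : ∀ k (f : Function.End (Fin n)),
      n - (Finset.image f Finset.univ).card ≤ k → f ∈ M := by
    intro k
    induction k with
    | zero =>
      intro f hf
      have h1 : (Finset.image f Finset.univ).card ≤ n := by
        simpa using Finset.card_le_univ (Finset.image f Finset.univ)
      have hcard : (Finset.image f Finset.univ).card = n := by omega
      have himg : Finset.image f Finset.univ = Finset.univ :=
        Finset.eq_univ_of_card _ (by simpa using hcard)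
      have hsurj : Surjective f := fun y => by
        have : y ∈ Finset.image f Finset.univ := himg.ge (Finset.mem_univ y)
        obtain ⟨x, _, hx⟩ := Finset.mem_image.mp this
        exact ⟨x, hx⟩
      have hbij : Bijective f := ⟨Finite.injective_iff_surjective.mpr hsurj, hsurj⟩
      exact hperm (Equiv.ofBijective f hbij)
    | succ k ih =>
      intro f hf
      by_cases hinj : Injective f
      · have hbij : Bijective f := ⟨hinj, Finite.injective_iff_surjective.mp hinj⟩
        exact hperm (Equiv.ofBijective f hbij)
      · unfold Injective at hinj
        push_neg at hinj
        obtain ⟨a, b, hfab, hab⟩ := hinj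
        -- there is some c outside the image
        have hne : Finset.image f Finset.univ ≠ Finset.univ := by
          intro h
          have hsurj : Surjective f := fun y => by
            have : y ∈ Finset.image f Finset.univ := h.ge (Finset.mem_univ y)
            obtain ⟨x, _, hx⟩ := Finset.mem_image.mp this
            exact ⟨x, hx⟩
          exact hab (Finite.injective_iff_surjective.mpr hsurj hfab)
        obtain ⟨c, _, hc⟩ := Finset.exists_of_ssubset
          (lt_of_le_of_ne (Finset.subset_univ _) hne)
        set g : Function.End (Fin n) := fun x => if x = a then c else f x with hg
        set cab : Function.End (Fin n) := fun x => if x = a then b else x with hcab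
        have hdecomp : f = g * cab := by
          funext x
          rw [hmul]
          by_cases h : x = a
          · simp only [hcab, hg]
            rw [if_pos h, if_neg (Ne.symm hab), h, hfab]
          · simp only [hcab, hg]
            rw [if_neg h, if_neg h]
        have himgg : Finset.image g Finset.univ = insert c (Finset.image f Finset.univ) := by
          ext y
          simp only [Finset.mem_image (f := g), Finset.mem_image (f := f), Finset.mem_image, Finset.mem_insert, Finset.mem_univ, true_and]
          constructor
          · rintro ⟨x, rfl⟩
            by_cases h : x = a
            · simp [hg, h]
            · right; exact ⟨x, by simp [hg, h]⟩
          · rintro (rfl | ⟨x, rfl⟩)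
            · exact ⟨a, by simp [hg]⟩
            · by_cases h : x = a
              · exact ⟨b, by simp [hg, Ne.symm hab, h, hfab.symm]⟩
              · exact ⟨x, by simp [hg, h]⟩
        have hcardg : (Finset.image g Finset.univ).card
            = (Finset.image f Finset.univ).card + 1 := by
          rw [himgg, Finset.card_insert_of_notMem hc]
        have hgM : g ∈ M := ih g (by omega)
        rw [hdecomp]
        exact mul_mem hgM (hcollapse a b hab)
  exact main n f₀ (by omega)
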